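/- There exists a finite connected bicyclic simple graph G (i.e., a connected graph with m(G) = n(G) + 1) such that F₂(G)/m(G) > F₁(G)/n(G); in particular, the inequality F₂(G)/m(G) ≤ F₁(G)/n(G), valid for acyclic and unicyclic graphs, fails for some bicyclic graph. -/

import Mathlib

open SimpleGraph Finset

variable {V : Type*}

/-- The Fermat distance of a vertex triple: minimum over all vertices σ of
    `d(σ,u) + d(σ,v) + d(σ,w)`. -/
noncomputable def fermatDist (G : SimpleGraph V) (u v w : V) : ℕ :=
  ⨅ σ : V, (G.dist σ u + G.dist σ v + G.dist σ w)

/-- The Fermat eccentricity `ε₃(u;G)`: maximum Fermat distance of triples containing `u`. -/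
noncomputable def fermatEcc [Fintype V] (G : SimpleGraph V) (u : V) : ℕ :=
  Finset.univ.sup fun p : V × V => fermatDist G u p.1 p.2

/-- The ordinary eccentricity `ε₂(u;G)`. -/
noncomputable def ecc2 [Fintype V] (G : SimpleGraph V) (u : V) : ℕ :=
  Finset.univ.sup fun v => G.dist u v

/-- The diameter of `G`. -/
noncomputable def gdiam [Fintype V] (G : SimpleGraph V) : ℕ :=
  Finset.univ.sup fun p : V × V => G.dist p.1 p.2

/-- A central vertex: one minimizing the ordinary eccentricity. -/
def isCentral [Fintype V] (G : SimpleGraph V) (c : V) : Prop :=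
  ∀ u : V, ecc2 G c ≤ ecc2 G u

/-- The number of edges of `G`. -/
noncomputable def numEdges [Fintype V] (G : SimpleGraph V) : ℕ :=
  letI := Classical.decEq V
  letI := Classical.decRel G.Adj
  G.edgeFinset.card

/-- The first Zagreb–Fermat eccentricity index `F₁(G) = Σ_u ε₃(u)²`. -/
noncomputable def F1 [Fintype V] (G : SimpleGraph V) : ℕ :=
  ∑ u : V, (fermatEcc G u) ^ 2

/-- The second Zagreb–Fermat eccentricity index `F₂(G) = Σ_{uv ∈ E} ε₃(u)·ε₃(v)`. -/
noncomputable def F2 [Fintype V] (G : SimpleGraph V) : ℕ :=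
  letI := Classical.decEq V
  letI := Classical.decRel G.Adj
  ∑ e ∈ G.edgeFinset,
    Sym2.lift ⟨fun u v => fermatEcc G u * fermatEcc G v, fun _ _ => mul_comm _ _⟩ e

/-- `u` lies in the subtree `T_{v_i}` hanging off the `i`-th vertex of the path `P`:
its geodesic to every vertex of `P` passes through `P.getVert i`. -/
def inSubtree (G : SimpleGraph V) {a b : V} (P : G.Walk a b) (i : ℕ) (u : V) : Prop :=
  ∀ j ≤ P.length, G.dist u (P.getVert j) = G.dist u (P.getVert i) + G.dist (P.getVert i) (P.getVert j)

/-- `ℓ_i`: the height of the subtree `T_{v_i}`. -/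
noncomputable def subtreeHeight [Fintype V] (G : SimpleGraph V) {a b : V} (P : G.Walk a b)
    (i : ℕ) : ℕ :=
  letI := Classical.decPred (inSubtree G P i)
  Finset.univ.sup fun u => if inSubtree G P i u then G.dist (P.getVert i) u else 0



-- distance table
def Dtab : List (List ℕ) :=
 [[0, 1, 2, 1, 3, 2, 2, 4, 3, 3, 5, 6],
  [1, 0, 1, 2, 2, 3, 3, 3, 4, 4, 4, 5],
  [2, 1, 0, 3, 1, 4, 4, 2, 5, 5, 3, 4],
  [1, 2, 3, 0, 4, 1, 1, 5, 2, 2, 6, 7],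
  [3, 2, 1, 4, 0, 5, 5, 1, 6, 6, 2, 3],
  [2, 3, 4, 1, 5, 0, 1, 6, 2, 1, 7, 8],
  [2, 3, 4, 1, 5, 1, 0, 6, 1, 2, 7, 8],
  [4, 3, 2, 5, 1, 6, 6, 0, 7, 7, 1, 2],
  [3, 4, 5, 2, 6, 2, 1, 7, 0, 1, 8, 9],
  [3, 4, 5, 2, 6, 1, 2, 7, 1, 0, 8, 9],
  [5, 4, 3, 6, 2, 7, 7, 1, 8, 8, 0, 1],
  [6, 5, 4, 7, 3, 8, 8, 2, 9, 9, 1, 0]]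

def D (u v : Fin 12) : ℕ := (Dtab.getD u.val []).getD v.val 0

lemma hD0' : ∀ u, D u u = 0 := by decide

def G12 : SimpleGraph (Fin 12) where
  Adj u v := D u v = 1
  symm := ⟨fun u v (h : D u v = 1) => show D v u = 1 by revert h; revert u v; decide⟩
  loopless := ⟨fun u (h : D u u = 1) => by rw [hD0'] at h; omega⟩

instance : DecidableRel G12.Adj := fun u v => inferInstanceAs (Decidable (D u v = 1))

lemma hD0 : ∀ u, D u u = 0 := by decide
lemma hD1 : ∀ u v, D u v = 0 → u = v := by decide
lemma hD2 : ∀ u v, u ≠ v → ∃ w, G12.Adj u w ∧ D w v + 1 = D u v := by decide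
lemma hD3 : ∀ u v w, G12.Adj u v → D u w ≤ D v w + 1 := by decide

lemma exists_walk_D : ∀ (n : ℕ) (u v : Fin 12), D u v = n → ∃ p : G12.Walk u v, p.length = n := by
  intro n
  induction n with
  | zero => intro u v h; obtain rfl := hD1 u v h; exact ⟨SimpleGraph.Walk.nil, rfl⟩
  | succ k ih =>
    intro u v h
    have hne : u ≠ v := by rintro rfl; rw [hD0] at h; omega
    obtain ⟨w, hadj, hw⟩ := hD2 u v hne
    obtain ⟨q, hq⟩ := ih w v (by omega)
    exact ⟨SimpleGraph.Walk.cons hadj q, by simp [hq]⟩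

lemma G12_preconnected : G12.Preconnected := by
  intro u v
  obtain ⟨p, -⟩ := exists_walk_D (D u v) u v rfl
  exact ⟨p⟩

lemma D_le_walk : ∀ {u v : Fin 12} (p : G12.Walk u v), D u v ≤ p.length := by
  intro u v p
  induction p with
  | nil => simp [hD0]
  | cons h q ih => simpa [Nat.add_comm] using (hD3 _ _ _ h).trans (by omega)

lemma dist_eq_D : ∀ u v, G12.dist u v = D u v := by
  intro u v
  apply le_antisymm
  · obtain ⟨p, hp⟩ := exists_walk_D (D u v) u v rfl
    exact hp ▸ SimpleGraph.dist_le p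
  · obtain ⟨p, hp⟩ := (G12_preconnected u v).exists_walk_length_eq_dist
    exact hp ▸ D_le_walk p

lemma iInf_eq_inf' {α : Type*} [Fintype α] [Nonempty α] (f : α → ℕ) :
    (⨅ x, f x) = Finset.univ.inf' Finset.univ_nonempty f := by
  apply le_antisymm
  · obtain ⟨x, -, hx⟩ := Finset.exists_mem_eq_inf' Finset.univ_nonempty f
    rw [hx]
    exact ciInf_le (OrderBot.bddBelow _) x
  · exact le_ciInf fun x => Finset.inf'_le f (Finset.mem_univ x)


def eccT : Fin 12 → ℕ := ![9,9,9,9,9,10,10,9,10,10,9,10]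

set_option maxRecDepth 10000 in
lemma fermatEcc_eq : ∀ u, fermatEcc G12 u = eccT u := by
  intro u
  unfold fermatEcc fermatDist
  simp only [dist_eq_D, iInf_eq_inf']
  revert u
  decide

lemma F1_eq : F1 G12 = 1067 := by
  unfold F1
  simp only [fermatEcc_eq]
  decide

lemma card_congr' {α : Type*} (i1 i2 : Fintype α) : @Fintype.card α i1 = @Fintype.card α i2 :=
  @Fintype.card_congr _ _ i1 i2 (Equiv.refl _)

lemma numEdges_eq : numEdges G12 = 13 := by
  unfold numEdges
  rw [SimpleGraph.edgeFinset, Set.toFinset_card]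
  rw [card_congr' _ (SimpleGraph.fintypeEdgeSet G12)]
  decide

lemma edgeFinset_indep (i1 i2 : Fintype G12.edgeSet) :
    @SimpleGraph.edgeFinset _ G12 i1 = @SimpleGraph.edgeFinset _ G12 i2 := by
  congr 1
  exact Subsingleton.elim _ _

lemma F2_eq : F2 G12 = 1156 := by
  unfold F2
  rw [edgeFinset_indep _ (SimpleGraph.fintypeEdgeSet G12)]
  have hf : ∀ e ∈ G12.edgeFinset, Sym2.lift ⟨fun u v => fermatEcc G12 u * fermatEcc G12 v, fun _ _ => mul_comm _ _⟩ e
      = Sym2.lift ⟨fun u v => eccT u * eccT v, fun _ _ => mul_comm _ _⟩ e := by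
    intro e _
    induction e using Sym2.ind with
    | _ x y => simp only [Sym2.lift_mk, fermatEcc_eq]
  rw [Finset.sum_congr rfl hf]
  decide

/-- There is a finite connected bicyclic graph (`m = n + 1`) with
`F₂(G)/m > F₁(G)/n`. -/
theorem exists_bicyclic_avg_F2_gt_avg_F1 :
    ∃ (n : ℕ) (G : SimpleGraph (Fin n)), G.Connected ∧ numEdges G = n + 1 ∧
      (F1 G : ℚ) / (n : ℚ) < (F2 G : ℚ) / (numEdges G : ℚ) := by
  refine ⟨12, G12, (SimpleGraph.connected_iff G12).mpr ⟨G12_preconnected, ⟨0⟩⟩, by rw [numEdges_eq], ?_⟩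
  rw [F1_eq, F2_eq, numEdges_eq]
  norm_num
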